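/- arXiv:1205.1619 — 4 statements merged into one kernel-verified Lean document; each statement's English description precedes it below -/
import Mathlib

section
/- Let F : ℝⁿ → ℝ be integrable with c := ∫_{ℝⁿ} F(z) dz > 0. Then there exists R₀ > 0 such that for all R ≥ R₀ one has ∫_{B_R} ∫_{B_R} F(x − y) dx dy ≥ (c/2) · vol(B_R). In particular, if the correlation function does not integrate to zero, the integrated fluctuations over macroscopic balls grow at least proportionally to their volume. -/
open MeasureTheory
open scoped Convolution

set_option maxHeartbeats 1000000 in
/-- If the integrable covariance `F` has positive total integral `c`, then for
all sufficiently large `R` the integrated fluctuation over the ball `B_R` is at least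
`(c/2) · vol(B_R)`, i.e. it grows at least proportionally to the volume. -/
theorem integrated_fluctuation_volume_lower_bound
    {n : ℕ} (F : EuclideanSpace ℝ (Fin n) → ℝ) (hF : Integrable F)
    (c : ℝ) (hc : c = ∫ z, F z) (hcpos : 0 < c) :
    ∃ R₀ : ℝ, 0 < R₀ ∧ ∀ R ≥ R₀,
      (c / 2) * (volume (Metric.closedBall (0 : EuclideanSpace ℝ (Fin n)) R)).toReal ≤
        ∫ x in Metric.closedBall (0 : EuclideanSpace ℝ (Fin n)) R,
          ∫ y in Metric.closedBall (0 : EuclideanSpace ℝ (Fin n)) R, F (x - y) := by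
  classical
  set M : ℝ := ∫ z, ‖F z‖ with hM
  have hM0 : 0 ≤ M := integral_nonneg fun z => norm_nonneg _
  -- tail of ∫‖F‖ is small beyond some radius T
  have htendsto : Filter.Tendsto
      (fun i : ℕ => ∫ z in Metric.closedBall (0 : EuclideanSpace ℝ (Fin n)) (i : ℝ), ‖F z‖)
      Filter.atTop (nhds M) := by
    have hU : (⋃ i : ℕ, Metric.closedBall (0 : EuclideanSpace ℝ (Fin n)) (i : ℝ)) = Set.univ := by
      ext x
      simp only [Set.mem_iUnion, Set.mem_univ, iff_true, Metric.mem_closedBall]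
      exact exists_nat_ge (dist x 0)
    have h := tendsto_setIntegral_of_monotone (μ := volume) (f := fun z => ‖F z‖)
      (s := fun i : ℕ => Metric.closedBall (0 : EuclideanSpace ℝ (Fin n)) (i : ℝ))
      (fun i => measurableSet_closedBall)
      (fun i j hij => Metric.closedBall_subset_closedBall (by exact_mod_cast hij))
      (by rw [hU]; exact hF.norm.integrableOn)
    rwa [hU, setIntegral_univ] at h
  obtain ⟨k, hk⟩ : ∃ k : ℕ,
      M - c / 8 ≤ ∫ z in Metric.closedBall (0 : EuclideanSpace ℝ (Fin n)) (k : ℝ), ‖F z‖ := by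
    have h := htendsto.eventually (eventually_gt_nhds (show M - c / 8 < M by linarith))
    obtain ⟨k, hk⟩ := h.exists
    exact ⟨k, hk.le⟩
  set T : ℝ := (k : ℝ) + 1 with hT
  have hT0 : 0 < T := by positivity
  have hTail : ∫ z in (Metric.closedBall (0 : EuclideanSpace ℝ (Fin n)) T)ᶜ, ‖F z‖ ≤ c / 8 := by
    have hsplit := integral_add_compl
      (measurableSet_closedBall (x := (0 : EuclideanSpace ℝ (Fin n))) (ε := (k : ℝ))) hF.norm
    have h1 : ∫ z in (Metric.closedBall (0 : EuclideanSpace ℝ (Fin n)) (k : ℝ))ᶜ, ‖F z‖ ≤ c / 8 := by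
      have : (∫ z in Metric.closedBall (0 : EuclideanSpace ℝ (Fin n)) (k : ℝ), ‖F z‖)
          + ∫ z in (Metric.closedBall (0 : EuclideanSpace ℝ (Fin n)) (k : ℝ))ᶜ, ‖F z‖ = M := hsplit
      linarith
    refine le_trans (setIntegral_mono_set hF.norm.integrableOn
      (Filter.Eventually.of_forall fun z => norm_nonneg _) ?_) h1
    refine (Set.compl_subset_compl.2
      (Metric.closedBall_subset_closedBall (by simp [hT]))).eventuallyLE
  -- the truncated absolute value
  set G : EuclideanSpace ℝ (Fin n) → ℝ :=
    ((Metric.closedBall (0 : EuclideanSpace ℝ (Fin n)) T)ᶜ).indicator (fun z => ‖F z‖) with hGdef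
  have hGint : Integrable G :=
    hF.norm.integrableOn.integrable_indicator measurableSet_closedBall.compl
  have hGnonneg : ∀ z, 0 ≤ G z := fun z =>
    Set.indicator_nonneg (fun z _ => norm_nonneg _) z
  have hGle : ∫ z, G z ≤ c / 8 := by
    rw [hGdef, integral_indicator measurableSet_closedBall.compl]
    exact hTail
  -- choice of R₀
  refine ⟨max T ((8 / (3 * c)) * n * T * (7 * c / 8 + M)) + 1, by
    have := le_max_left T ((8 / (3 * c)) * n * T * (7 * c / 8 + M)); linarith, ?_⟩
  intro R hR
  have hRT : T < R := by
    have := le_max_left T ((8 / (3 * c)) * n * T * (7 * c / 8 + M)); linarith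
  have hRpos : 0 < R := lt_trans hT0 hRT
  have hR1 : (8 / (3 * c)) * n * T * (7 * c / 8 + M) ≤ R := by
    have := le_max_right T ((8 / (3 * c)) * n * T * (7 * c / 8 + M)); linarith
  -- the convolution φ
  set f₁ : EuclideanSpace ℝ (Fin n) → ℝ :=
    (Metric.closedBall (0 : EuclideanSpace ℝ (Fin n)) R).indicator (fun _ => (1 : ℝ)) with hf₁
  have hf₁i : Integrable f₁ := by
    refine IntegrableOn.integrable_indicator ?_ measurableSet_closedBall
    exact integrableOn_const measure_closedBall_lt_top.ne
  set φ : EuclideanSpace ℝ (Fin n) → ℝ := f₁ ⋆[ContinuousLinearMap.lsmul ℝ ℝ] F with hφdef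
  have hφeq : ∀ x, φ x = ∫ y in Metric.closedBall (0 : EuclideanSpace ℝ (Fin n)) R, F (x - y) := by
    intro x
    rw [hφdef, convolution_def, ← integral_indicator measurableSet_closedBall]
    congr 1
    ext y
    by_cases hy : y ∈ Metric.closedBall (0 : EuclideanSpace ℝ (Fin n)) R
    · simp [hf₁, hy]
    · simp [hf₁, hy]
  have hφi : Integrable φ := hf₁i.integrable_convolution (ContinuousLinearMap.lsmul ℝ ℝ) hF
  have hcomp : ∀ x : EuclideanSpace ℝ (Fin n), Integrable fun y => F (x - y) :=
    fun x => hF.comp_sub_left x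
  -- pointwise lower bound by -M
  have hlowM : ∀ x, -M ≤ φ x := by
    intro x
    rw [hφeq x]
    have h1 : ‖∫ y in Metric.closedBall (0 : EuclideanSpace ℝ (Fin n)) R, F (x - y)‖
        ≤ ∫ y in Metric.closedBall (0 : EuclideanSpace ℝ (Fin n)) R, ‖F (x - y)‖ :=
      norm_integral_le_integral_norm _
    have h2 : (∫ y in Metric.closedBall (0 : EuclideanSpace ℝ (Fin n)) R, ‖F (x - y)‖)
        ≤ ∫ y, ‖F (x - y)‖ :=
      setIntegral_le_integral (hcomp x).norm (Filter.Eventually.of_forall fun y => norm_nonneg _)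
    have h3 : (∫ y, ‖F (x - y)‖) = M := integral_sub_left_eq_self (fun z => ‖F z‖) volume x
    have h4 := neg_abs_le (∫ y in Metric.closedBall (0 : EuclideanSpace ℝ (Fin n)) R, F (x - y))
    rw [Real.norm_eq_abs] at h1
    linarith
  -- main lower bound on the inner ball
  have hmain : ∀ x ∈ Metric.closedBall (0 : EuclideanSpace ℝ (Fin n)) (R - T),
      c - c / 8 ≤ φ x := by
    intro x hx
    have hxnorm : ‖x‖ ≤ R - T := by
      have := Metric.mem_closedBall.1 hx
      rwa [dist_zero_right] at this
    have hsplit := integral_add_compl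
      (measurableSet_closedBall (x := (0 : EuclideanSpace ℝ (Fin n))) (ε := R)) (hcomp x)
    have htot : (∫ y, F (x - y)) = c := by
      rw [integral_sub_left_eq_self F volume x]; exact hc.symm
    have htail2 : (∫ y in (Metric.closedBall (0 : EuclideanSpace ℝ (Fin n)) R)ᶜ, F (x - y))
        ≤ c / 8 := by
      have hpt : ∀ y ∈ (Metric.closedBall (0 : EuclideanSpace ℝ (Fin n)) R)ᶜ,
          F (x - y) ≤ G (x - y) := by
        intro y hy
        have hy' : R < ‖y‖ := by
          have : ¬ dist y 0 ≤ R := hy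
          rw [dist_zero_right] at this
          linarith [not_le.1 this]
        have hxy : T < ‖x - y‖ := by
          have h5 : ‖y‖ - ‖x‖ ≤ ‖y - x‖ := norm_sub_norm_le y x
          have h6 : ‖y - x‖ = ‖x - y‖ := norm_sub_rev y x
          linarith
        have hmem : x - y ∈ (Metric.closedBall (0 : EuclideanSpace ℝ (Fin n)) T)ᶜ := by
          simp only [Set.mem_compl_iff, Metric.mem_closedBall, dist_zero_right, not_le]
          exact hxy
        rw [hGdef, Set.indicator_of_mem hmem]
        exact le_trans (le_abs_self _) (le_of_eq (Real.norm_eq_abs _).symm)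
      calc (∫ y in (Metric.closedBall (0 : EuclideanSpace ℝ (Fin n)) R)ᶜ, F (x - y))
          ≤ ∫ y in (Metric.closedBall (0 : EuclideanSpace ℝ (Fin n)) R)ᶜ, G (x - y) :=
            setIntegral_mono_on (hcomp x).integrableOn
              (hGint.comp_sub_left x).integrableOn measurableSet_closedBall.compl hpt
        _ ≤ ∫ y, G (x - y) :=
            setIntegral_le_integral (hGint.comp_sub_left x)
              (Filter.Eventually.of_forall fun y => hGnonneg _)
        _ = ∫ z, G z := integral_sub_left_eq_self G volume x
        _ ≤ c / 8 := hGle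
    rw [hφeq x]
    have : (∫ y in Metric.closedBall (0 : EuclideanSpace ℝ (Fin n)) R, F (x - y))
        + ∫ y in (Metric.closedBall (0 : EuclideanSpace ℝ (Fin n)) R)ᶜ, F (x - y) = c := by
      rw [hsplit, htot]
    linarith
  -- volumes
  have hv₀pos : (0 : ℝ) < (volume (Metric.closedBall (0 : EuclideanSpace ℝ (Fin n)) 1)).toReal :=
    ENNReal.toReal_pos (Metric.measure_closedBall_pos volume _ one_pos).ne' measure_closedBall_lt_top.ne
  set v₀ : ℝ := (volume (Metric.closedBall (0 : EuclideanSpace ℝ (Fin n)) 1)).toReal with hv₀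
  have hvol : ∀ r : ℝ, 0 ≤ r →
      (volume (Metric.closedBall (0 : EuclideanSpace ℝ (Fin n)) r)).toReal = r ^ n * v₀ := by
    intro r hr
    rw [Measure.addHaar_closedBall' volume (0 : EuclideanSpace ℝ (Fin n)) hr,
      finrank_euclideanSpace_fin, ENNReal.toReal_mul, ENNReal.toReal_ofReal (by positivity)]
  have hST : (0 : ℝ) < R - T := by linarith
  have hsubset : Metric.closedBall (0 : EuclideanSpace ℝ (Fin n)) (R - T)
      ⊆ Metric.closedBall (0 : EuclideanSpace ℝ (Fin n)) R :=
    Metric.closedBall_subset_closedBall (by linarith)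
  -- split the outer integral
  have hdiff : (∫ x in Metric.closedBall (0 : EuclideanSpace ℝ (Fin n)) R \
        Metric.closedBall (0 : EuclideanSpace ℝ (Fin n)) (R - T), φ x)
      = (∫ x in Metric.closedBall (0 : EuclideanSpace ℝ (Fin n)) R, φ x)
        - ∫ x in Metric.closedBall (0 : EuclideanSpace ℝ (Fin n)) (R - T), φ x :=
    integral_diff measurableSet_closedBall hφi.integrableOn hsubset
  -- lower bounds on the two pieces
  have hb1 : (c - c / 8) * (volume (Metric.closedBall (0 : EuclideanSpace ℝ (Fin n)) (R - T))).toReal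
      ≤ ∫ x in Metric.closedBall (0 : EuclideanSpace ℝ (Fin n)) (R - T), φ x := by
    have := setIntegral_mono_on
      (f := fun _ => c - c / 8) (g := φ)
      (integrableOn_const measure_closedBall_lt_top.ne) hφi.integrableOn
      measurableSet_closedBall hmain
    rwa [setIntegral_const, measureReal_def, smul_eq_mul, mul_comm] at this
  have hb2 : (-M) * ((volume (Metric.closedBall (0 : EuclideanSpace ℝ (Fin n)) R)).toReal
        - (volume (Metric.closedBall (0 : EuclideanSpace ℝ (Fin n)) (R - T))).toReal)
      ≤ ∫ x in Metric.closedBall (0 : EuclideanSpace ℝ (Fin n)) R \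
          Metric.closedBall (0 : EuclideanSpace ℝ (Fin n)) (R - T), φ x := by
    have hmeas : MeasurableSet (Metric.closedBall (0 : EuclideanSpace ℝ (Fin n)) R \
        Metric.closedBall (0 : EuclideanSpace ℝ (Fin n)) (R - T)) :=
      measurableSet_closedBall.diff measurableSet_closedBall
    have hμ : volume (Metric.closedBall (0 : EuclideanSpace ℝ (Fin n)) R \
        Metric.closedBall (0 : EuclideanSpace ℝ (Fin n)) (R - T))
        = volume (Metric.closedBall (0 : EuclideanSpace ℝ (Fin n)) R)
          - volume (Metric.closedBall (0 : EuclideanSpace ℝ (Fin n)) (R - T)) :=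
      measure_diff hsubset measurableSet_closedBall.nullMeasurableSet
        measure_closedBall_lt_top.ne
    have h := setIntegral_mono_on
      (f := fun _ => -M) (g := φ)
      (integrableOn_const (lt_of_le_of_lt (measure_mono Set.diff_subset)
        measure_closedBall_lt_top).ne) hφi.integrableOn
      hmeas (fun x _ => hlowM x)
    rw [setIntegral_const, measureReal_def, smul_eq_mul, mul_comm, hμ, ENNReal.toReal_sub_of_le
      (measure_mono hsubset) measure_closedBall_lt_top.ne] at h
    exact h
  -- put everything together
  have hIneq : (c - c / 8) * ((R - T) ^ n * v₀)
      + (-M) * (R ^ n * v₀ - (R - T) ^ n * v₀)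
      ≤ ∫ x in Metric.closedBall (0 : EuclideanSpace ℝ (Fin n)) R, φ x := by
    have e1 := hvol (R - T) hST.le
    have e2 := hvol R hRpos.le
    rw [e1] at hb1
    rw [e1, e2] at hb2
    linarith [hdiff]
  -- final arithmetic via Bernoulli
  have hbern : R ^ n * (1 - n * (T / R)) ≤ (R - T) ^ n := by
    have ha : (-2 : ℝ) ≤ -(T / R) := by
      have : T / R ≤ 1 := (div_le_one hRpos).2 hRT.le
      linarith
    have h := one_add_mul_le_pow ha n
    have h2 : (1 + -(T / R)) = 1 - T / R := by ring
    rw [h2] at h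
    have h3 : (0 : ℝ) ≤ R ^ n := by positivity
    have h4 : R ^ n * (1 + n * -(T / R)) ≤ R ^ n * (1 - T / R) ^ n :=
      mul_le_mul_of_nonneg_left h h3
    have h5 : R ^ n * (1 - T / R) ^ n = (R - T) ^ n := by
      rw [← mul_pow]
      congr 1
      field_simp
    have h6 : R ^ n * (1 - n * (T / R)) = R ^ n * (1 + n * -(T / R)) := by ring
    rw [h6]
    exact h5 ▸ h4
  have hcM : (c / 2 + M) * R ^ n ≤ (7 * c / 8 + M) * (R - T) ^ n := by
    have hpos1 : (0 : ℝ) < 7 * c / 8 + M := by linarith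
    have h7 : (7 * c / 8 + M) * (R ^ n * (1 - n * (T / R))) ≤ (7 * c / 8 + M) * (R - T) ^ n :=
      mul_le_mul_of_nonneg_left hbern hpos1.le
    refine le_trans ?_ h7
    have h8 : (0 : ℝ) ≤ R ^ n := by positivity
    -- need (c/2 + M) ≤ (7c/8 + M)(1 - n T / R), i.e. (n T / R)(7c/8+M) ≤ 3c/8
    have h9 : (n : ℝ) * T / R * (7 * c / 8 + M) ≤ 3 * c / 8 := by
      rw [div_mul_eq_mul_div, div_le_iff₀ hRpos]
      have h10 : (8 / (3 * c)) * n * T * (7 * c / 8 + M) * (3 * c / 8) ≤ R * (3 * c / 8) :=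
        mul_le_mul_of_nonneg_right hR1 (by linarith)
      have h11 : (8 / (3 * c)) * n * T * (7 * c / 8 + M) * (3 * c / 8)
          = (n : ℝ) * T * (7 * c / 8 + M) := by
        field_simp
      calc (n : ℝ) * T * (7 * c / 8 + M) = (8 / (3 * c)) * n * T * (7 * c / 8 + M) * (3 * c / 8) :=
            h11.symm
        _ ≤ R * (3 * c / 8) := h10
        _ = 3 * c / 8 * R := by ring
    have h12 : (c / 2 + M) ≤ (7 * c / 8 + M) * (1 - n * (T / R)) := by
      have : (7 * c / 8 + M) * (1 - n * (T / R)) = (7 * c / 8 + M) - (n * T / R) * (7 * c / 8 + M) := by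
        ring
      rw [this]
      have : (n : ℝ) * T / R * (7 * c / 8 + M) ≤ 3 * c / 8 := h9
      linarith
    calc (c / 2 + M) * R ^ n ≤ ((7 * c / 8 + M) * (1 - n * (T / R))) * R ^ n :=
          mul_le_mul_of_nonneg_right h12 h8
      _ = (7 * c / 8 + M) * (R ^ n * (1 - n * (T / R))) := by ring
  -- conclude
  have hgoal : (c / 2) * (R ^ n * v₀)
      ≤ ∫ x in Metric.closedBall (0 : EuclideanSpace ℝ (Fin n)) R, φ x := by
    refine le_trans ?_ hIneq
    have h := mul_le_mul_of_nonneg_right hcM hv₀pos.le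
    linarith [h]
  have hfinal : (∫ x in Metric.closedBall (0 : EuclideanSpace ℝ (Fin n)) R, φ x)
      = ∫ x in Metric.closedBall (0 : EuclideanSpace ℝ (Fin n)) R,
          ∫ y in Metric.closedBall (0 : EuclideanSpace ℝ (Fin n)) R, F (x - y) :=
    setIntegral_congr_fun measurableSet_closedBall fun x _ => hφeq x
  rw [← hfinal, hvol R hRpos.le]
  exact hgoal
end

section
/- (First-order averaging theorem.) Let f : ℝⁿ × ℝ → ℝⁿ be continuous, T-periodic in its second argument (f(x, t + T) = f(x, t)), bounded by M (‖f(x,t)‖ ≤ M), and Lipschitz in x with constant L uniformly in t. Define the averaged vector field f̄(x) := (1/T)∫₀ᵀ f(x, s) ds. Fix x₀ ∈ ℝⁿ and T₀ > 0. For ε ∈ (0, 1], let x_ε : [0, T₀/ε] → ℝⁿ be differentiable with x_ε'(t) = ε·f(x_ε(t), t) and x_ε(0) = x₀, and let y_ε : [0, T₀/ε] → ℝⁿ be differentiable with y_ε'(t) = ε·f̄(y_ε(t)) and y_ε(0) = x₀. Then there exists a constant C, depending only on M, L, T and T₀, such that ‖x_ε(t) − y_ε(t)‖ ≤ C·ε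 for all t ∈ [0, T₀/ε] and all ε ∈ (0, 1]. That is, on time scales of order 1/ε the true slowly varying motion is approximated to order ε by the averaged equation. -/
open MeasureTheory Set

set_option maxHeartbeats 2000000

lemma ftc_within {E : Type*} [NormedAddCommGroup E] [NormedSpace ℝ E] [CompleteSpace E]
    {g : ℝ → E} {a b : ℝ} (hab : a ≤ b) (hg : ContinuousOn g (Icc a b))
    {t : ℝ} (ht : t ∈ Icc a b) :
    HasDerivWithinAt (fun u => ∫ s in a..u, g s) (g t) (Icc a b) t := by
  haveI : Fact (t ∈ Icc a b) := ⟨ht⟩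
  refine intervalIntegral.integral_hasDerivWithinAt_right ?_ ?_ (hg t ht)
  · exact (hg.mono (uIcc_subset_Icc (left_mem_Icc.2 hab) ht)).intervalIntegrable
  · exact hg.stronglyMeasurableAtFilter_nhdsWithin measurableSet_Icc t

/-- First-order averaging theorem: for a continuous, `T`-periodic vector
field `f` bounded by `M` and Lipschitz in `x` with constant `L` uniformly in `t`, the
solution of `ẋ = ε f(x, t)` stays within `C·ε` of the solution of the averaged equation
`ẏ = ε f̄(y)`, `f̄(x) = (1/T)∫₀ᵀ f(x,s) ds`, on the time interval `[0, T₀/ε]`, with `C`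
depending only on `M`, `L`, `T`, `T₀`. -/
theorem first_order_averaging
    {n : ℕ} (f : EuclideanSpace ℝ (Fin n) → ℝ → EuclideanSpace ℝ (Fin n))
    (T M : ℝ) (L : NNReal) (hT : 0 < T)
    (hcont : Continuous (Function.uncurry f))
    (hper : ∀ x t, f x (t + T) = f x t)
    (hbound : ∀ x t, ‖f x t‖ ≤ M)
    (hlip : ∀ t, LipschitzWith L (fun x => f x t))
    (T₀ : ℝ) (hT₀ : 0 < T₀) :
    ∃ C : ℝ, ∀ x₀ : EuclideanSpace ℝ (Fin n), ∀ ε ∈ Ioc (0 : ℝ) 1,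
      ∀ xε yε : ℝ → EuclideanSpace ℝ (Fin n),
        xε 0 = x₀ → yε 0 = x₀ →
        (∀ t ∈ Icc (0 : ℝ) (T₀ / ε),
          HasDerivWithinAt xε (ε • f (xε t) t) (Icc (0 : ℝ) (T₀ / ε)) t) →
        (∀ t ∈ Icc (0 : ℝ) (T₀ / ε),
          HasDerivWithinAt yε (ε • ((1 / T) • ∫ s in (0 : ℝ)..T, f (yε t) s))
            (Icc (0 : ℝ) (T₀ / ε)) t) →
        ∀ t ∈ Icc (0 : ℝ) (T₀ / ε), ‖xε t - yε t‖ ≤ C * ε := by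
  have hM : 0 ≤ M := le_trans (norm_nonneg _) (hbound 0 0)
  set F : EuclideanSpace ℝ (Fin n) → EuclideanSpace ℝ (Fin n) :=
    fun x => (1 / T) • ∫ s in (0 : ℝ)..T, f x s with hF
  have hfx : ∀ x, Continuous (fun s => f x s) := fun x => hcont.comp (Continuous.prodMk_right x)
  -- F is bounded by M
  have hFnorm : ∀ x, ‖F x‖ ≤ M := by
    intro x
    rw [hF, norm_smul]
    have h1 : ‖∫ s in (0 : ℝ)..T, f x s‖ ≤ M * |T - 0| :=
      intervalIntegral.norm_integral_le_of_norm_le_const (fun s _ => hbound x s)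
    rw [sub_zero, abs_of_pos hT] at h1
    rw [Real.norm_eq_abs, abs_of_pos (by positivity : (0:ℝ) < 1/T)]
    calc (1/T) * ‖∫ s in (0 : ℝ)..T, f x s‖ ≤ (1/T) * (M * T) :=
          mul_le_mul_of_nonneg_left h1 (by positivity)
      _ = M := by field_simp
  -- F is Lipschitz with constant L
  have hFlipW : LipschitzWith L F := by
    apply LipschitzWith.of_dist_le_mul
    intro x y
    rw [dist_eq_norm, dist_eq_norm, hF]
    simp only
    rw [← smul_sub, norm_smul, Real.norm_eq_abs, abs_of_pos (by positivity : (0:ℝ) < 1/T)]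
    rw [← intervalIntegral.integral_sub ((hfx x).intervalIntegrable _ _)
      ((hfx y).intervalIntegrable _ _)]
    have h1 : ‖∫ s in (0 : ℝ)..T, (f x s - f y s)‖ ≤ (L * ‖x - y‖) * |T - 0| := by
      apply intervalIntegral.norm_integral_le_of_norm_le_const
      intro s _
      have := (hlip s).dist_le_mul x y
      rw [dist_eq_norm, dist_eq_norm] at this
      exact this
    rw [sub_zero, abs_of_pos hT] at h1
    calc (1/T) * ‖∫ s in (0 : ℝ)..T, (f x s - f y s)‖ ≤ (1/T) * ((L * ‖x - y‖) * T) :=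
          mul_le_mul_of_nonneg_left h1 (by positivity)
      _ = L * ‖x - y‖ := by field_simp
  have hFlip : ∀ x y, ‖F x - F y‖ ≤ L * ‖x - y‖ := by
    intro x y
    have := hFlipW.dist_le_mul x y
    rwa [dist_eq_norm, dist_eq_norm] at this
  -- integral over any period
  have hFint : ∀ (c : EuclideanSpace ℝ (Fin n)) (a : ℝ),
      (∫ s in a..(a + T), f c s) = T • F c := by
    intro c a
    have hp : Function.Periodic (f c) T := fun t => hper c t
    rw [hp.intervalIntegral_add_eq a 0, zero_add, hF]
    simp only
    rw [smul_smul]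
    rw [mul_one_div_cancel (ne_of_gt hT), one_smul]
  set K : ℝ := 2 * L * M * T * T₀ + 2 * M * T with hK
  have hK0 : 0 ≤ K := by positivity
  refine ⟨K * (Real.exp (L * T₀) + 1), ?_⟩
  rintro x₀ ε ⟨hε0, hε1⟩ xε yε hx0 hy0 hxd hyd
  set b : ℝ := T₀ / ε with hbdef
  have hb : 0 < b := div_pos hT₀ hε0
  have hbε : b * ε = T₀ := div_mul_cancel₀ _ (ne_of_gt hε0)
  have hyc : ContinuousOn yε (Icc 0 b) := fun t ht => (hyd t ht).continuousWithinAt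
  have hxc : ContinuousOn xε (Icc 0 b) := fun t ht => (hxd t ht).continuousWithinAt
  -- yε moves slowly
  have hyslow : ∀ s ∈ Icc (0:ℝ) b, ∀ u ∈ Icc (0:ℝ) b, ‖yε u - yε s‖ ≤ (ε * M) * ‖u - s‖ := by
    intro s hs u hu
    refine (convex_Icc 0 b).norm_image_sub_le_of_norm_hasDerivWithin_le hyd ?_ hs hu
    intro t _
    rw [norm_smul, Real.norm_eq_abs, abs_of_pos hε0]
    exact mul_le_mul_of_nonneg_left (hFnorm (yε t)) hε0.le
  set g : ℝ → EuclideanSpace ℝ (Fin n) := fun s => f (yε s) s - F (yε s) with hg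
  have hgc : ContinuousOn g (Icc 0 b) := by
    apply ContinuousOn.sub
    · exact hcont.comp_continuousOn (hyc.prodMk (continuousOn_id))
    · exact hFlipW.continuous.comp_continuousOn hyc
  have hgnorm : ∀ s ∈ Icc (0:ℝ) b, ‖g s‖ ≤ 2 * M := by
    intro s hs
    calc ‖g s‖ ≤ ‖f (yε s) s‖ + ‖F (yε s)‖ := norm_sub_le _ _
      _ ≤ M + M := add_le_add (hbound _ _) (hFnorm _)
      _ = 2 * M := by ring
  -- integral of g over one period is O(ε)
  have hper1 : ∀ a : ℝ, 0 ≤ a → a + T ≤ b →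
      ‖∫ s in a..(a + T), g s‖ ≤ 2 * L * M * T ^ 2 * ε := by
    intro a ha0 haT
    set h : ℝ → EuclideanSpace ℝ (Fin n) := fun s => f (yε a) s - F (yε a) with hh
    have hsub : Icc a (a + T) ⊆ Icc 0 b := Icc_subset_Icc ha0 haT
    have hgint : IntervalIntegrable g volume a (a + T) :=
      (hgc.mono (uIcc_subset_Icc (hsub (left_mem_Icc.2 (by linarith)))
        (hsub (right_mem_Icc.2 (by linarith))))).intervalIntegrable
    have hhint : IntervalIntegrable h volume a (a + T) :=
      ((hfx (yε a)).sub continuous_const).intervalIntegrable _ _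
    have hhzero : (∫ s in a..(a + T), h s) = 0 := by
      rw [hh]
      rw [intervalIntegral.integral_sub ((hfx (yε a)).intervalIntegrable _ _)
        (intervalIntegrable_const)]
      rw [hFint (yε a) a, intervalIntegral.integral_const]
      simp
    have key : (∫ s in a..(a + T), g s) = ∫ s in a..(a + T), (g s - h s) := by
      rw [intervalIntegral.integral_sub hgint hhint, hhzero, sub_zero]
    rw [key]
    have hbd : ∀ s ∈ Set.uIoc a (a + T), ‖g s - h s‖ ≤ 2 * L * M * T * ε := by
      intro s hs
      rw [uIoc_of_le (by linarith)] at hs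
      have hsmem : s ∈ Icc 0 b := hsub ⟨by linarith [hs.1], hs.2⟩
      have hamem : a ∈ Icc 0 b := hsub (left_mem_Icc.2 (by linarith))
      have hy : ‖yε s - yε a‖ ≤ ε * M * T := by
        calc ‖yε s - yε a‖ ≤ (ε * M) * ‖s - a‖ := hyslow a hamem s hsmem
          _ ≤ (ε * M) * T := by
              apply mul_le_mul_of_nonneg_left _ (by positivity)
              rw [Real.norm_eq_abs, abs_of_nonneg (by linarith [hs.1])]
              linarith [hs.2]
          _ = ε * M * T := by ring
      have h1 : ‖f (yε s) s - f (yε a) s‖ ≤ L * (ε * M * T) := by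
        have := (hlip s).dist_le_mul (yε s) (yε a)
        rw [dist_eq_norm, dist_eq_norm] at this
        exact this.trans (mul_le_mul_of_nonneg_left hy L.2)
      have h2 : ‖F (yε a) - F (yε s)‖ ≤ L * (ε * M * T) := by
        refine (hFlip _ _).trans ?_
        rw [norm_sub_rev]
        exact mul_le_mul_of_nonneg_left hy L.2
      calc ‖g s - h s‖ = ‖(f (yε s) s - f (yε a) s) + (F (yε a) - F (yε s))‖ := by
            simp only [hg, hh]; abel_nf
        _ ≤ ‖f (yε s) s - f (yε a) s‖ + ‖F (yε a) - F (yε s)‖ := norm_add_le _ _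
        _ ≤ L * (ε * M * T) + L * (ε * M * T) := add_le_add h1 h2
        _ = 2 * L * M * T * ε := by ring
    calc ‖∫ s in a..(a + T), (g s - h s)‖ ≤ (2 * L * M * T * ε) * |a + T - a| :=
          intervalIntegral.norm_integral_le_of_norm_le_const hbd
      _ = 2 * L * M * T ^ 2 * ε := by
          rw [add_sub_cancel_left, abs_of_pos hT]; ring
  have hgintOn : ∀ a₁ ∈ Icc (0:ℝ) b, ∀ a₂ ∈ Icc (0:ℝ) b, IntervalIntegrable g volume a₁ a₂ :=
    fun a₁ h₁ a₂ h₂ => (hgc.mono (uIcc_subset_Icc h₁ h₂)).intervalIntegrable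
  -- integral over k periods
  have hkper : ∀ k : ℕ, (k : ℝ) * T ≤ b →
      ‖∫ s in (0:ℝ)..((k : ℝ) * T), g s‖ ≤ (k : ℝ) * (2 * L * M * T ^ 2 * ε) := by
    intro k
    induction k with
    | zero => simp
    | succ k ih =>
      intro hkb
      have hkT : (k : ℝ) * T ≤ b := by
        refine le_trans ?_ hkb
        push_cast
        nlinarith [hT.le]
      have hkT0 : 0 ≤ (k : ℝ) * T := by positivity
      have hkT1 : (k : ℝ) * T + T ≤ b := by
        refine le_trans (le_of_eq ?_) hkb
        push_cast; ring
      have heq : ((k + 1 : ℕ) : ℝ) * T = (k : ℝ) * T + T := by push_cast; ring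
      rw [heq, ← intervalIntegral.integral_add_adjacent_intervals
        (hgintOn 0 (left_mem_Icc.2 hb.le) _ ⟨hkT0, hkT⟩)
        (hgintOn _ ⟨hkT0, hkT⟩ _ ⟨by linarith, hkT1⟩)]
      calc ‖(∫ s in (0:ℝ)..((k:ℝ)*T), g s) + ∫ s in ((k:ℝ)*T)..((k:ℝ)*T + T), g s‖
          ≤ ‖∫ s in (0:ℝ)..((k:ℝ)*T), g s‖ + ‖∫ s in ((k:ℝ)*T)..((k:ℝ)*T + T), g s‖ :=
            norm_add_le _ _
        _ ≤ (k : ℝ) * (2 * L * M * T ^ 2 * ε) + 2 * L * M * T ^ 2 * ε :=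
            add_le_add (ih hkT) (hper1 _ hkT0 hkT1)
        _ = ((k + 1 : ℕ) : ℝ) * (2 * L * M * T ^ 2 * ε) := by push_cast; ring
  -- bound on the integral of g up to any time
  have hu : ∀ t ∈ Icc (0:ℝ) b, ‖∫ s in (0:ℝ)..t, g s‖ ≤ K := by
    intro t ht
    set k : ℕ := ⌊t / T⌋₊ with hkdef
    have hk1 : (k : ℝ) ≤ t / T := Nat.floor_le (div_nonneg ht.1 hT.le)
    have hk2 : t / T < (k : ℝ) + 1 := Nat.lt_floor_add_one _
    have hkt : (k : ℝ) * T ≤ t := (le_div_iff₀ hT).1 hk1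
    have htk : t ≤ (k : ℝ) * T + T := by
      have := (div_lt_iff₀ hT).1 hk2
      linarith
    have hkb' : (k : ℝ) * T ≤ b := le_trans hkt ht.2
    rw [← intervalIntegral.integral_add_adjacent_intervals
      (hgintOn 0 (left_mem_Icc.2 hb.le) _ ⟨by positivity, hkb'⟩)
      (hgintOn _ ⟨by positivity, hkb'⟩ t ht)]
    have h1 : ‖∫ s in ((k:ℝ)*T)..t, g s‖ ≤ 2 * M * T := by
      calc ‖∫ s in ((k:ℝ)*T)..t, g s‖ ≤ (2 * M) * |t - (k:ℝ)*T| := by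
            apply intervalIntegral.norm_integral_le_of_norm_le_const
            intro s hs
            rw [uIoc_of_le hkt] at hs
            exact hgnorm s ⟨le_trans (by positivity) hs.1.le, le_trans hs.2 ht.2⟩
        _ ≤ (2 * M) * T := by
            apply mul_le_mul_of_nonneg_left _ (by positivity)
            rw [abs_of_nonneg (by linarith)]; linarith
        _ = 2 * M * T := by ring
    have h2 : ‖∫ s in (0:ℝ)..((k:ℝ)*T), g s‖ ≤ 2 * L * M * T * T₀ := by
      refine le_trans (hkper k hkb') ?_
      have hkleb : (k : ℝ) ≤ b / T := le_trans hk1 (by gcongr; exact ht.2)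
      calc (k : ℝ) * (2 * L * M * T ^ 2 * ε) ≤ (b / T) * (2 * L * M * T ^ 2 * ε) :=
            mul_le_mul_of_nonneg_right hkleb (by positivity)
        _ = 2 * L * M * T * (b * ε) := by field_simp
        _ = 2 * L * M * T * T₀ := by rw [hbε]
    calc ‖(∫ s in (0:ℝ)..((k:ℝ)*T), g s) + ∫ s in ((k:ℝ)*T)..t, g s‖
        ≤ ‖∫ s in (0:ℝ)..((k:ℝ)*T), g s‖ + ‖∫ s in ((k:ℝ)*T)..t, g s‖ := norm_add_le _ _
      _ ≤ 2 * L * M * T * T₀ + 2 * M * T := add_le_add h2 h1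
      _ = K := by rw [hK]
  -- the corrected difference
  set w : ℝ → EuclideanSpace ℝ (Fin n) :=
    fun t => xε t - yε t - ε • ∫ s in (0:ℝ)..t, g s with hw
  have hwd : ∀ t ∈ Icc (0:ℝ) b,
      HasDerivWithinAt w (ε • (f (xε t) t - f (yε t) t)) (Icc 0 b) t := by
    intro t ht
    have h1 := ((hxd t ht).sub (hyd t ht)).sub ((ftc_within hb.le hgc ht).const_smul ε)
    refine h1.congr_deriv ?_
    simp only [hg, smul_sub]
    abel
  have hwc : ContinuousOn w (Icc 0 b) := fun t ht => (hwd t ht).continuousWithinAt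
  have hdiff : ∀ t ∈ Icc (0:ℝ) b, ‖xε t - yε t‖ ≤ ‖w t‖ + ε * K := by
    intro t ht
    have : xε t - yε t = w t + ε • ∫ s in (0:ℝ)..t, g s := by simp [hw]
    rw [this]
    refine (norm_add_le _ _).trans (add_le_add_right ?_ _)
    rw [norm_smul, Real.norm_eq_abs, abs_of_pos hε0]
    exact mul_le_mul_of_nonneg_left (hu t ht) hε0.le
  -- Gronwall
  have hgron : ∀ t ∈ Icc (0:ℝ) b,
      ‖w t‖ ≤ gronwallBound 0 (ε * L) (ε ^ 2 * L * K) (t - 0) := by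
    apply norm_le_gronwallBound_of_norm_deriv_right_le hwc
    · intro t ht
      exact (hwd t (Ico_subset_Icc_self ht)).mono_of_mem_nhdsWithin
        (Icc_mem_nhdsGE_of_mem ht)
    · simp [hw, hx0, hy0]
    · intro t ht
      have htc := Ico_subset_Icc_self ht
      rw [norm_smul, Real.norm_eq_abs, abs_of_pos hε0]
      have h1 : ‖f (xε t) t - f (yε t) t‖ ≤ L * ‖xε t - yε t‖ := by
        have := (hlip t).dist_le_mul (xε t) (yε t)
        rwa [dist_eq_norm, dist_eq_norm] at this
      calc ε * ‖f (xε t) t - f (yε t) t‖ ≤ ε * (L * ‖xε t - yε t‖) :=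
            mul_le_mul_of_nonneg_left h1 hε0.le
        _ ≤ ε * (L * (‖w t‖ + ε * K)) := by
            apply mul_le_mul_of_nonneg_left _ hε0.le
            exact mul_le_mul_of_nonneg_left (hdiff t htc) L.2
        _ = (ε * L) * ‖w t‖ + ε ^ 2 * L * K := by ring
  -- bound the gronwallBound by C * ε terms
  have hgb : ∀ t ∈ Icc (0:ℝ) b,
      gronwallBound 0 (ε * L) (ε ^ 2 * L * K) (t - 0) ≤ ε * (K * Real.exp (L * T₀)) := by
    intro t ht
    rw [sub_zero]
    rcases eq_or_ne (L : ℝ) 0 with hL | hL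
    · rw [hL]
      simp only [mul_zero, zero_mul, gronwallBound_K0, zero_add, Real.exp_zero, mul_one]
      have : (0:ℝ) ≤ ε * (K * Real.exp (0 * T₀)) :=
        mul_nonneg hε0.le (mul_nonneg hK0 (Real.exp_pos _).le)
      simpa using this
    · have hεL : ε * L ≠ 0 := by positivity
      rw [gronwallBound_of_K_ne_0 hεL]
      have he : ε ^ 2 * L * K / (ε * L) = ε * K := by
        field_simp
      rw [he]
      have hexp : Real.exp (ε * L * t) ≤ Real.exp (L * T₀) := by
        apply Real.exp_le_exp.2
        have : ε * t ≤ T₀ := by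
          calc ε * t ≤ ε * b := mul_le_mul_of_nonneg_left ht.2 hε0.le
            _ = T₀ := by rw [mul_comm]; exact hbε
        calc ε * (L : ℝ) * t = (L : ℝ) * (ε * t) := by ring
          _ ≤ (L : ℝ) * T₀ := mul_le_mul_of_nonneg_left this L.2
      calc (0:ℝ) * Real.exp (ε * L * t) + ε * K * (Real.exp (ε * L * t) - 1)
          ≤ 0 + ε * K * Real.exp (ε * L * t) := by
            rw [zero_mul]
            apply add_le_add_right
            apply mul_le_mul_of_nonneg_left _ (by positivity)
            linarith [Real.exp_pos (ε * L * t)]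
        _ ≤ ε * K * Real.exp (L * T₀) := by
            rw [zero_add]
            exact mul_le_mul_of_nonneg_left hexp (by positivity)
        _ = ε * (K * Real.exp (L * T₀)) := by ring
  -- conclusion
  intro t ht
  calc ‖xε t - yε t‖ ≤ ‖w t‖ + ε * K := hdiff t ht
    _ ≤ ε * (K * Real.exp (L * T₀)) + ε * K :=
        add_le_add_left ((hgron t ht).trans (hgb t ht)) _
    _ = K * (Real.exp (L * T₀) + 1) * ε := by ring
end

section
/- (Madelung/Bohm decomposition, one particle.) Let m > 0, V : ℝ × ℝ → ℝ, and let R, S : ℝ × ℝ → ℝ be such that R(x,t) > 0 for all (x,t) and all partial derivatives below exist (R, S twice differentiable in x and once in t). Define ψ(x,t) := R(x,t)·e^{i S(x,t)}. Then ψ satisfies the Schrödinger equation i·∂_t ψ = −(1/(2m))·∂_x² ψ + V·ψ at every point if and only if at every point the pair (R, S) satisfies: (i) the continuity equation ∂_t(R²) = −(1/m)·∂_x(R²·∂_x S), and (ii) the quantum Hamilton–Jacobi equation ∂_t S = −(1/(2m))·(∂_x S)² − V − V_q, where V_q := −(1/(2m))·(∂_x² R)/R is Bohm's quantum potential. -/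
open Complex in
private lemma psi_x_deriv' (R S : ℝ → ℝ → ℝ) (t : ℝ)
    (hRx : ∀ x, DifferentiableAt ℝ (fun ξ => R ξ t) x)
    (hSx : ∀ x, DifferentiableAt ℝ (fun ξ => S ξ t) x) (ξ : ℝ) :
    deriv (fun ξ' => (R ξ' t : ℂ) * Complex.exp (Complex.I * (S ξ' t : ℂ))) ξ
      = (Complex.ofReal (deriv (fun ξ' => R ξ' t) ξ)
          + Complex.I * Complex.ofReal (R ξ t) * Complex.ofReal (deriv (fun ξ' => S ξ' t) ξ))
        * Complex.exp (Complex.I * (S ξ t : ℂ)) := by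
  have h1 : HasDerivAt (fun ξ' => (R ξ' t : ℂ)) (Complex.ofReal (deriv (fun ξ' => R ξ' t) ξ)) ξ :=
    ((hRx ξ).hasDerivAt).ofReal_comp
  have h2 : HasDerivAt (fun ξ' => Complex.I * (S ξ' t : ℂ))
      (Complex.I * Complex.ofReal (deriv (fun ξ' => S ξ' t) ξ)) ξ :=
    (((hSx ξ).hasDerivAt).ofReal_comp).const_mul _
  have h3 := h1.mul h2.cexp
  erw [h3.deriv]; ring

/-- Madelung/Bohm decomposition, one particle: with `ψ = R e^{iS}`,
`R > 0`, the Schrödinger equation `i ∂_t ψ = −(1/(2m)) ∂_x² ψ + V ψ` holds at every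
point iff the continuity equation `∂_t(R²) = −(1/m) ∂_x(R² ∂_x S)` and the quantum
Hamilton–Jacobi equation `∂_t S = −(1/(2m))(∂_x S)² − V − V_q` hold at every point,
where `V_q = −(1/(2m)) (∂_x² R)/R` is Bohm's quantum potential (units `ℏ = 1`). -/
theorem madelung_bohm_one_particle
    (m : ℝ) (hm : 0 < m) (V : ℝ → ℝ → ℝ) (R S : ℝ → ℝ → ℝ)
    (hRpos : ∀ x t, 0 < R x t)
    (hRt : ∀ x t, DifferentiableAt ℝ (fun τ => R x τ) t)
    (hSt : ∀ x t, DifferentiableAt ℝ (fun τ => S x τ) t)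
    (hRx : ∀ x t, DifferentiableAt ℝ (fun ξ => R ξ t) x)
    (hSx : ∀ x t, DifferentiableAt ℝ (fun ξ => S ξ t) x)
    (hRxx : ∀ x t, DifferentiableAt ℝ (fun ξ => deriv (fun ξ' => R ξ' t) ξ) x)
    (hSxx : ∀ x t, DifferentiableAt ℝ (fun ξ => deriv (fun ξ' => S ξ' t) ξ) x) :
    (∀ x t,
        Complex.I *
            deriv (fun τ => (R x τ : ℂ) * Complex.exp (Complex.I * (S x τ : ℂ))) t =
          -(1 / (2 * (m : ℂ))) *
              deriv (fun ξ =>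
                deriv (fun ξ' => (R ξ' t : ℂ) * Complex.exp (Complex.I * (S ξ' t : ℂ))) ξ) x +
            (V x t : ℂ) * ((R x t : ℂ) * Complex.exp (Complex.I * (S x t : ℂ)))) ↔
      ((∀ x t,
          deriv (fun τ => R x τ ^ 2) t =
            -(1 / m) * deriv (fun ξ => R ξ t ^ 2 * deriv (fun ξ' => S ξ' t) ξ) x) ∧
        (∀ x t,
          deriv (fun τ => S x τ) t =
            -(1 / (2 * m)) * (deriv (fun ξ => S ξ t) x) ^ 2 - V x t -
              (-(1 / (2 * m)) * (deriv (fun ξ => deriv (fun ξ' => R ξ' t) ξ) x / R x t)))) := by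
  have key : ∀ x t,
      (Complex.I *
            deriv (fun τ => (R x τ : ℂ) * Complex.exp (Complex.I * (S x τ : ℂ))) t =
          -(1 / (2 * (m : ℂ))) *
              deriv (fun ξ =>
                deriv (fun ξ' => (R ξ' t : ℂ) * Complex.exp (Complex.I * (S ξ' t : ℂ))) ξ) x +
            (V x t : ℂ) * ((R x t : ℂ) * Complex.exp (Complex.I * (S x t : ℂ)))) ↔
      ((deriv (fun τ => R x τ ^ 2) t =
            -(1 / m) * deriv (fun ξ => R ξ t ^ 2 * deriv (fun ξ' => S ξ' t) ξ) x) ∧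
        (deriv (fun τ => S x τ) t =
            -(1 / (2 * m)) * (deriv (fun ξ => S ξ t) x) ^ 2 - V x t -
              (-(1 / (2 * m)) * (deriv (fun ξ => deriv (fun ξ' => R ξ' t) ξ) x / R x t)))) := by
    intro x t
    set r := R x t with hr_def
    set s := S x t with hs_def
    set rt := deriv (fun τ => R x τ) t with hrt_def
    set st := deriv (fun τ => S x τ) t with hst_def
    set rx := deriv (fun ξ => R ξ t) x with hrx_def
    set sx := deriv (fun ξ => S ξ t) x with hsx_def
    set rxx := deriv (fun ξ => deriv (fun ξ' => R ξ' t) ξ) x with hrxx_def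
    set sxx := deriv (fun ξ => deriv (fun ξ' => S ξ' t) ξ) x with hsxx_def
    set v := V x t with hv_def
    have hrpos := hRpos x t
    have hrne : r ≠ 0 := ne_of_gt hrpos
    have hmne : m ≠ 0 := ne_of_gt hm
    set E := Complex.exp (Complex.I * (s : ℂ)) with hE_def
    have hE : E ≠ 0 := Complex.exp_ne_zero _
    -- time derivative of ψ
    have Ht : deriv (fun τ => (R x τ : ℂ) * Complex.exp (Complex.I * (S x τ : ℂ))) t
        = (Complex.ofReal rt + Complex.I * Complex.ofReal r * Complex.ofReal st) * E := by
      have h1 : HasDerivAt (fun τ => (R x τ : ℂ)) (Complex.ofReal rt) t :=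
        ((hRt x t).hasDerivAt).ofReal_comp
      have h2 : HasDerivAt (fun τ => Complex.I * (S x τ : ℂ))
          (Complex.I * Complex.ofReal st) t :=
        (((hSt x t).hasDerivAt).ofReal_comp).const_mul _
      have h3 := h1.mul h2.cexp
      erw [h3.deriv]; ring
    -- second x derivative of ψ
    have Hx2 : deriv (fun ξ =>
          deriv (fun ξ' => (R ξ' t : ℂ) * Complex.exp (Complex.I * (S ξ' t : ℂ))) ξ) x
        = (Complex.ofReal rxx + 2 * Complex.I * Complex.ofReal rx * Complex.ofReal sx
            + Complex.I * Complex.ofReal r * Complex.ofReal sxx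
            - Complex.ofReal r * Complex.ofReal sx ^ 2) * E := by
      have hfun : (fun ξ =>
            deriv (fun ξ' => (R ξ' t : ℂ) * Complex.exp (Complex.I * (S ξ' t : ℂ))) ξ)
          = (fun ξ => (Complex.ofReal (deriv (fun ξ' => R ξ' t) ξ)
              + Complex.I * Complex.ofReal (R ξ t) * Complex.ofReal (deriv (fun ξ' => S ξ' t) ξ))
            * Complex.exp (Complex.I * (S ξ t : ℂ))) := by
        funext ξ
        exact psi_x_deriv' R S t (fun x' => hRx x' t) (fun x' => hSx x' t) ξ
      rw [hfun]
      have hA : HasDerivAt (fun ξ => Complex.ofReal (deriv (fun ξ' => R ξ' t) ξ))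
          (Complex.ofReal rxx) x := ((hRxx x t).hasDerivAt).ofReal_comp
      have hB : HasDerivAt (fun ξ => Complex.ofReal (R ξ t)) (Complex.ofReal rx) x :=
        ((hRx x t).hasDerivAt).ofReal_comp
      have hC : HasDerivAt (fun ξ => Complex.ofReal (deriv (fun ξ' => S ξ' t) ξ))
          (Complex.ofReal sxx) x := ((hSxx x t).hasDerivAt).ofReal_comp
      have hS' : HasDerivAt (fun ξ => Complex.I * (S ξ t : ℂ))
          (Complex.I * Complex.ofReal sx) x :=
        (((hSx x t).hasDerivAt).ofReal_comp).const_mul _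
      have hfst := hA.add ((hB.const_mul Complex.I).mul hC)
      have h3 := hfst.mul hS'.cexp
      erw [h3.deriv]; simp only [Pi.add_apply, Pi.mul_apply]; push_cast
      linear_combination ((R x t : ℂ) * ((deriv (fun ξ' => S ξ' t) x : ℝ) : ℂ) ^ 2 *
        Complex.exp (Complex.I * ((S x t : ℝ) : ℂ))) * Complex.I_sq
    -- target derivatives
    have HtR2 : deriv (fun τ => R x τ ^ 2) t = 2 * r * rt := by
      have := ((hRt x t).hasDerivAt).pow 2
      erw [this.deriv]; push_cast; ring
    have HxC : deriv (fun ξ => R ξ t ^ 2 * deriv (fun ξ' => S ξ' t) ξ) x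
        = 2 * r * rx * sx + r ^ 2 * sxx := by
      have h1 := ((hRx x t).hasDerivAt).pow 2
      have := h1.mul ((hSxx x t).hasDerivAt)
      erw [this.deriv]; simp only [Pi.pow_apply]; push_cast; ring
    rw [Ht, Hx2, HtR2, HxC]
    -- factor out E and split into real and imaginary parts
    have step1 : (Complex.I * ((Complex.ofReal rt + Complex.I * Complex.ofReal r * Complex.ofReal st) * E)
          = -(1 / (2 * (m : ℂ))) * ((Complex.ofReal rxx + 2 * Complex.I * Complex.ofReal rx * Complex.ofReal sx
              + Complex.I * Complex.ofReal r * Complex.ofReal sxx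
              - Complex.ofReal r * Complex.ofReal sx ^ 2) * E)
            + (v : ℂ) * ((r : ℂ) * E))
        ↔ ((Complex.ofReal (-(r * st)) + Complex.ofReal rt * Complex.I) * E
          = (Complex.ofReal (v * r - 1 / (2 * m) * (rxx - r * sx ^ 2))
              + Complex.ofReal (-(1 / (2 * m)) * (2 * rx * sx + r * sxx)) * Complex.I) * E) := by
      constructor
      · intro h; push_cast at h ⊢
        linear_combination h + (-((r:ℂ) * (st:ℂ) * E)) * Complex.I_sq
      · intro h; push_cast at h ⊢
        linear_combination h + ((r:ℂ) * (st:ℂ) * E) * Complex.I_sq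
    rw [step1, mul_left_inj' hE]
    have step2 : (Complex.ofReal (-(r * st)) + Complex.ofReal rt * Complex.I
          = Complex.ofReal (v * r - 1 / (2 * m) * (rxx - r * sx ^ 2))
              + Complex.ofReal (-(1 / (2 * m)) * (2 * rx * sx + r * sxx)) * Complex.I)
        ↔ ((-(r * st) = v * r - 1 / (2 * m) * (rxx - r * sx ^ 2))
            ∧ (rt = -(1 / (2 * m)) * (2 * rx * sx + r * sxx))) := by
      constructor
      · intro h
        constructor
        · have := congrArg Complex.re h; simpa [pow_two] using this
        · have := congrArg Complex.im h; simpa [pow_two] using this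
      · rintro ⟨h1, h2⟩; rw [h1, h2]
    rw [step2]
    -- real equivalences
    have hI1 : (rt = -(1 / (2 * m)) * (2 * rx * sx + r * sxx))
        ↔ (2 * r * rt = -(1 / m) * (2 * r * rx * sx + r ^ 2 * sxx)) := by
      constructor
      · intro h; rw [h]; field_simp
      · intro h
        have h2 : 2 * r * (-(1 / (2 * m)) * (2 * rx * sx + r * sxx))
            = -(1 / m) * (2 * r * rx * sx + r ^ 2 * sxx) := by field_simp
        have h3 : 2 * r * rt = 2 * r * (-(1 / (2 * m)) * (2 * rx * sx + r * sxx)) :=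
          h.trans h2.symm
        exact mul_left_cancel₀ (by positivity) h3
    have hI2 : (-(r * st) = v * r - 1 / (2 * m) * (rxx - r * sx ^ 2))
        ↔ (st = -(1 / (2 * m)) * sx ^ 2 - v - (-(1 / (2 * m)) * (rxx / r))) := by
      constructor
      · intro h
        have h4 : r * (-(1 / (2 * m)) * sx ^ 2 - v - (-(1 / (2 * m)) * (rxx / r)))
            = -(v * r - 1 / (2 * m) * (rxx - r * sx ^ 2)) := by
          field_simp; ring
        have h3 : r * st = r * (-(1 / (2 * m)) * sx ^ 2 - v - (-(1 / (2 * m)) * (rxx / r))) := by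
          rw [h4, ← h]; ring
        exact mul_left_cancel₀ hrne h3
      · intro h; rw [h]; field_simp; ring
    constructor
    · rintro ⟨h1, h2⟩; exact ⟨hI1.mp h2, hI2.mp h1⟩
    · rintro ⟨h1, h2⟩; exact ⟨hI2.mpr h2, hI1.mpr h1⟩
  exact ⟨fun h => ⟨fun x t => ((key x t).mp (h x t)).1, fun x t => ((key x t).mp (h x t)).2⟩,
    fun h x t => (key x t).mpr ⟨h.1 x t, h.2 x t⟩⟩
end

section
/- (Madelung/Bohm decomposition, two particles.) Let m₁, m₂ > 0, V : ℝ × ℝ × ℝ → ℝ, and let R, S : ℝ × ℝ × ℝ → ℝ (arguments x₁, x₂, t) be such that R > 0 everywhere and all partial derivatives below exist. Define ψ(x₁,x₂,t) := R·e^{iS}. Then ψ satisfies the two-particle Schrödinger equation i·∂_t ψ = −(1/(2m₁))·∂_{x₁}² ψ − (1/(2m₂))·∂_{x₂}² ψ + V·ψ at every point if and only if at every point: (i) ∂_t(R²) = −( ∂_{x₁}(R²·∂_{x₁}S/m₁) + ∂_{x₂}(R²·∂_{x₂}S/m₂) ), and (ii) ∂_t S = −( (∂_{x₁}S)²/(2m₁)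 + (∂_{x₂}S)²/(2m₂) ) − V + ( (1/(2m₁))·∂_{x₁}²R/R + (1/(2m₂))·∂_{x₂}²R/R ). Here the phase function S and amplitude R depend on both particle positions simultaneously (the problem of 'polydimensions'). -/
lemma psi_hasDerivAt (f g : ℝ → ℝ) (x : ℝ)
    (hf : DifferentiableAt ℝ f x) (hg : DifferentiableAt ℝ g x) :
    HasDerivAt (fun y => (f y : ℂ) * Complex.exp (Complex.I * (g y : ℂ)))
      ((((deriv f x : ℝ) : ℂ) + Complex.I * (f x) * (deriv g x)) * Complex.exp (Complex.I * (g x : ℂ))) x := by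
  have hf' := (hf.hasDerivAt).ofReal_comp
  have hg' := (hg.hasDerivAt).ofReal_comp
  have hE : HasDerivAt (fun y => Complex.exp (Complex.I * (g y : ℂ)))
      (Complex.exp (Complex.I * (g x : ℂ)) * (Complex.I * (deriv g x))) x :=
    (hg'.const_mul Complex.I).cexp
  have h := hf'.fun_mul hE
  refine h.congr_deriv ?_
  ring

lemma psi_deriv2 (f g : ℝ → ℝ) (x : ℝ)
    (hf : ∀ y, DifferentiableAt ℝ f y) (hg : ∀ y, DifferentiableAt ℝ g y)
    (hf2 : DifferentiableAt ℝ (deriv f) x) (hg2 : DifferentiableAt ℝ (deriv g) x) :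
    deriv (fun y => deriv (fun z => (f z : ℂ) * Complex.exp (Complex.I * (g z : ℂ))) y) x =
      (((deriv (deriv f) x : ℝ) : ℂ) - (f x) * (deriv g x) ^ 2
        + Complex.I * (2 * deriv f x * deriv g x + f x * deriv (deriv g) x))
        * Complex.exp (Complex.I * (g x : ℂ)) := by
  have hfun : (fun y => deriv (fun z => (f z : ℂ) * Complex.exp (Complex.I * (g z : ℂ))) y)
      = fun y => (((deriv f y : ℝ) : ℂ) + Complex.I * (f y) * (deriv g y)) * Complex.exp (Complex.I * (g y : ℂ)) := by
    funext y
    exact (psi_hasDerivAt f g y (hf y) (hg y)).deriv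
  rw [hfun]
  have a := (hf2.hasDerivAt).ofReal_comp
  have b := ((hf x).hasDerivAt).ofReal_comp
  have d := (hg2.hasDerivAt).ofReal_comp
  have hb : HasDerivAt (fun y => ((f y : ℂ) * ((deriv g y : ℝ) : ℂ)))
      (((deriv f x : ℝ) : ℂ) * (deriv g x) + (f x) * (deriv (deriv g) x)) x := by
    exact b.mul d
  have h1 : HasDerivAt (fun y => (((deriv f y : ℝ) : ℂ) + Complex.I * (f y) * (deriv g y)))
      (((deriv (deriv f) x : ℝ) : ℂ) + Complex.I * ((deriv f x) * (deriv g x) + (f x) * (deriv (deriv g) x))) x := by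
    have h := a.add (hb.const_mul Complex.I)
    have e : (fun y => (((deriv f y : ℝ) : ℂ)) + Complex.I * (f y) * (deriv g y))
        = (fun y => (((deriv f y : ℝ) : ℂ)) + Complex.I * ((f y : ℂ) * ((deriv g y : ℝ) : ℂ))) := by
      funext y; ring
    rw [e]
    exact h
  have hE : HasDerivAt (fun y => Complex.exp (Complex.I * (g y : ℂ)))
      (Complex.exp (Complex.I * (g x : ℂ)) * (Complex.I * (deriv g x))) x :=
    ((((hg x).hasDerivAt).ofReal_comp).const_mul Complex.I).cexp
  rw [(h1.fun_mul hE).deriv]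
  linear_combination ((f x : ℂ) * (deriv g x) ^ 2 * Complex.exp (Complex.I * (g x : ℂ))) * Complex.I_mul_I

/-- Madelung/Bohm decomposition, two particles: with
`ψ(x₁,x₂,t) = R e^{iS}`, `R > 0`, the two-particle Schrödinger equation
`i ∂_t ψ = −(1/(2m₁)) ∂_{x₁}² ψ − (1/(2m₂)) ∂_{x₂}² ψ + V ψ` holds at every point iff
the continuity equation `∂_t(R²) = −(∂_{x₁}(R² ∂_{x₁}S/m₁) + ∂_{x₂}(R² ∂_{x₂}S/m₂))`
and the quantum Hamilton–Jacobi equation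
`∂_t S = −((∂_{x₁}S)²/(2m₁) + (∂_{x₂}S)²/(2m₂)) − V + ((1/(2m₁)) ∂_{x₁}²R/R + (1/(2m₂)) ∂_{x₂}²R/R)`
hold at every point (units `ℏ = 1`). -/
theorem madelung_bohm_two_particles
    (m₁ m₂ : ℝ) (hm₁ : 0 < m₁) (hm₂ : 0 < m₂)
    (V : ℝ → ℝ → ℝ → ℝ) (R S : ℝ → ℝ → ℝ → ℝ)
    (hRpos : ∀ x₁ x₂ t, 0 < R x₁ x₂ t)
    (hRt : ∀ x₁ x₂ t, DifferentiableAt ℝ (fun τ => R x₁ x₂ τ) t)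
    (hSt : ∀ x₁ x₂ t, DifferentiableAt ℝ (fun τ => S x₁ x₂ τ) t)
    (hRx₁ : ∀ x₁ x₂ t, DifferentiableAt ℝ (fun ξ => R ξ x₂ t) x₁)
    (hSx₁ : ∀ x₁ x₂ t, DifferentiableAt ℝ (fun ξ => S ξ x₂ t) x₁)
    (hRx₂ : ∀ x₁ x₂ t, DifferentiableAt ℝ (fun η => R x₁ η t) x₂)
    (hSx₂ : ∀ x₁ x₂ t, DifferentiableAt ℝ (fun η => S x₁ η t) x₂)
    (hRx₁x₁ : ∀ x₁ x₂ t, DifferentiableAt ℝ (fun ξ => deriv (fun ξ' => R ξ' x₂ t) ξ) x₁)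
    (hSx₁x₁ : ∀ x₁ x₂ t, DifferentiableAt ℝ (fun ξ => deriv (fun ξ' => S ξ' x₂ t) ξ) x₁)
    (hRx₂x₂ : ∀ x₁ x₂ t, DifferentiableAt ℝ (fun η => deriv (fun η' => R x₁ η' t) η) x₂)
    (hSx₂x₂ : ∀ x₁ x₂ t, DifferentiableAt ℝ (fun η => deriv (fun η' => S x₁ η' t) η) x₂) :
    (∀ x₁ x₂ t,
        Complex.I *
            deriv (fun τ => (R x₁ x₂ τ : ℂ) * Complex.exp (Complex.I * (S x₁ x₂ τ : ℂ))) t =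
          -(1 / (2 * (m₁ : ℂ))) *
              deriv (fun ξ =>
                deriv (fun ξ' => (R ξ' x₂ t : ℂ) * Complex.exp (Complex.I * (S ξ' x₂ t : ℂ))) ξ) x₁ +
            -(1 / (2 * (m₂ : ℂ))) *
              deriv (fun η =>
                deriv (fun η' => (R x₁ η' t : ℂ) * Complex.exp (Complex.I * (S x₁ η' t : ℂ))) η) x₂ +
            (V x₁ x₂ t : ℂ) * ((R x₁ x₂ t : ℂ) * Complex.exp (Complex.I * (S x₁ x₂ t : ℂ)))) ↔
      ((∀ x₁ x₂ t,
          deriv (fun τ => R x₁ x₂ τ ^ 2) t =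
            -(deriv (fun ξ => R ξ x₂ t ^ 2 * deriv (fun ξ' => S ξ' x₂ t) ξ / m₁) x₁ +
              deriv (fun η => R x₁ η t ^ 2 * deriv (fun η' => S x₁ η' t) η / m₂) x₂)) ∧
        (∀ x₁ x₂ t,
          deriv (fun τ => S x₁ x₂ τ) t =
            -((deriv (fun ξ => S ξ x₂ t) x₁) ^ 2 / (2 * m₁) +
                (deriv (fun η => S x₁ η t) x₂) ^ 2 / (2 * m₂)) -
              V x₁ x₂ t +
              ((1 / (2 * m₁)) * (deriv (fun ξ => deriv (fun ξ' => R ξ' x₂ t) ξ) x₁ / R x₁ x₂ t) +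
                (1 / (2 * m₂)) * (deriv (fun η => deriv (fun η' => R x₁ η' t) η) x₂ / R x₁ x₂ t)))) := by
  have key : ∀ x₁ x₂ t,
      (Complex.I *
            deriv (fun τ => (R x₁ x₂ τ : ℂ) * Complex.exp (Complex.I * (S x₁ x₂ τ : ℂ))) t =
          -(1 / (2 * (m₁ : ℂ))) *
              deriv (fun ξ =>
                deriv (fun ξ' => (R ξ' x₂ t : ℂ) * Complex.exp (Complex.I * (S ξ' x₂ t : ℂ))) ξ) x₁ +
            -(1 / (2 * (m₂ : ℂ))) *
              deriv (fun η =>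
                deriv (fun η' => (R x₁ η' t : ℂ) * Complex.exp (Complex.I * (S x₁ η' t : ℂ))) η) x₂ +
            (V x₁ x₂ t : ℂ) * ((R x₁ x₂ t : ℂ) * Complex.exp (Complex.I * (S x₁ x₂ t : ℂ)))) ↔
      ((deriv (fun τ => R x₁ x₂ τ ^ 2) t =
            -(deriv (fun ξ => R ξ x₂ t ^ 2 * deriv (fun ξ' => S ξ' x₂ t) ξ / m₁) x₁ +
              deriv (fun η => R x₁ η t ^ 2 * deriv (fun η' => S x₁ η' t) η / m₂) x₂)) ∧
        (deriv (fun τ => S x₁ x₂ τ) t =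
            -((deriv (fun ξ => S ξ x₂ t) x₁) ^ 2 / (2 * m₁) +
                (deriv (fun η => S x₁ η t) x₂) ^ 2 / (2 * m₂)) -
              V x₁ x₂ t +
              ((1 / (2 * m₁)) * (deriv (fun ξ => deriv (fun ξ' => R ξ' x₂ t) ξ) x₁ / R x₁ x₂ t) +
                (1 / (2 * m₂)) * (deriv (fun η => deriv (fun η' => R x₁ η' t) η) x₂ / R x₁ x₂ t)))) := by
    intro x₁ x₂ t
    set r := R x₁ x₂ t with hr_def
    have hr : r ≠ 0 := ne_of_gt (hRpos x₁ x₂ t)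
    have hm₁' : m₁ ≠ 0 := ne_of_gt hm₁
    have hm₂' : m₂ ≠ 0 := ne_of_gt hm₂
    set s := S x₁ x₂ t with hs_def
    set rt := deriv (fun τ => R x₁ x₂ τ) t with hrt_def
    set st := deriv (fun τ => S x₁ x₂ τ) t with hst_def
    set r1 := deriv (fun ξ => R ξ x₂ t) x₁ with hr1_def
    set s1 := deriv (fun ξ => S ξ x₂ t) x₁ with hs1_def
    set r2 := deriv (fun η => R x₁ η t) x₂ with hr2_def
    set s2 := deriv (fun η => S x₁ η t) x₂ with hs2_def
    set r11 := deriv (fun ξ => deriv (fun ξ' => R ξ' x₂ t) ξ) x₁ with hr11_def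
    set s11 := deriv (fun ξ => deriv (fun ξ' => S ξ' x₂ t) ξ) x₁ with hs11_def
    set r22 := deriv (fun η => deriv (fun η' => R x₁ η' t) η) x₂ with hr22_def
    set s22 := deriv (fun η => deriv (fun η' => S x₁ η' t) η) x₂ with hs22_def
    set v := V x₁ x₂ t with hv_def
    set E := Complex.exp (Complex.I * (s : ℂ)) with hE_def
    have hE : E ≠ 0 := Complex.exp_ne_zero _
    -- complex derivatives
    have dt : deriv (fun τ => (R x₁ x₂ τ : ℂ) * Complex.exp (Complex.I * (S x₁ x₂ τ : ℂ))) t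
        = ((rt : ℂ) + Complex.I * r * st) * E :=
      (psi_hasDerivAt (fun τ => R x₁ x₂ τ) (fun τ => S x₁ x₂ τ) t (hRt x₁ x₂ t) (hSt x₁ x₂ t)).deriv
    have dxx1 : deriv (fun ξ =>
          deriv (fun ξ' => (R ξ' x₂ t : ℂ) * Complex.exp (Complex.I * (S ξ' x₂ t : ℂ))) ξ) x₁
        = ((r11 : ℂ) - r * s1 ^ 2 + Complex.I * (2 * s1 * r1 + r * s11)) * E := by
      have h := psi_deriv2 (fun ξ' => R ξ' x₂ t) (fun ξ' => S ξ' x₂ t) x₁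
        (fun y => hRx₁ y x₂ t) (fun y => hSx₁ y x₂ t) (hRx₁x₁ x₁ x₂ t) (hSx₁x₁ x₁ x₂ t)
      rw [h, hE_def, hs_def, hr_def, hs1_def, hr1_def, hs11_def, hr11_def]; ring_nf
    have dxx2 : deriv (fun η =>
          deriv (fun η' => (R x₁ η' t : ℂ) * Complex.exp (Complex.I * (S x₁ η' t : ℂ))) η) x₂
        = ((r22 : ℂ) - r * s2 ^ 2 + Complex.I * (2 * s2 * r2 + r * s22)) * E := by
      have h := psi_deriv2 (fun η' => R x₁ η' t) (fun η' => S x₁ η' t) x₂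
        (fun y => hRx₂ x₁ y t) (fun y => hSx₂ x₁ y t) (hRx₂x₂ x₁ x₂ t) (hSx₂x₂ x₁ x₂ t)
      rw [h, hE_def, hs_def, hr_def, hs2_def, hr2_def, hs22_def, hr22_def]; ring_nf
    -- real derivatives
    have dR2t : deriv (fun τ => R x₁ x₂ τ ^ 2) t = 2 * r * rt := by
      have h := ((hRt x₁ x₂ t).hasDerivAt.fun_pow 2).deriv
      rw [h, hr_def, hrt_def]; ring_nf
    have dJ1 : deriv (fun ξ => R ξ x₂ t ^ 2 * deriv (fun ξ' => S ξ' x₂ t) ξ / m₁) x₁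
        = (2 * r * r1 * s1 + r ^ 2 * s11) / m₁ := by
      have h := ((((hRx₁ x₁ x₂ t).hasDerivAt.fun_pow 2).fun_mul (hSx₁x₁ x₁ x₂ t).hasDerivAt).div_const m₁).deriv
      rw [h, hr_def, hr1_def, hs1_def, hs11_def]; ring_nf
    have dJ2 : deriv (fun η => R x₁ η t ^ 2 * deriv (fun η' => S x₁ η' t) η / m₂) x₂
        = (2 * r * r2 * s2 + r ^ 2 * s22) / m₂ := by
      have h := ((((hRx₂ x₁ x₂ t).hasDerivAt.fun_pow 2).fun_mul (hSx₂x₂ x₁ x₂ t).hasDerivAt).div_const m₂).deriv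
      rw [h, hr_def, hr2_def, hs2_def, hs22_def]; ring_nf
    rw [dt, dxx1, dxx2, dR2t, dJ1, dJ2]
    -- cancel E
    have step1 : (Complex.I * (((rt : ℂ) + Complex.I * r * st) * E) =
        -(1 / (2 * (m₁ : ℂ))) * (((r11 : ℂ) - r * s1 ^ 2 + Complex.I * (2 * s1 * r1 + r * s11)) * E) +
          -(1 / (2 * (m₂ : ℂ))) * (((r22 : ℂ) - r * s2 ^ 2 + Complex.I * (2 * s2 * r2 + r * s22)) * E) +
          (v : ℂ) * ((r : ℂ) * E)) ↔
        (((-(r * st) : ℝ) : ℂ) + ((rt : ℝ) : ℂ) * Complex.I =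
          ((-(1 / (2 * m₁)) * (r11 - r * s1 ^ 2) + -(1 / (2 * m₂)) * (r22 - r * s2 ^ 2) + v * r : ℝ) : ℂ) +
          ((-(1 / (2 * m₁)) * (2 * s1 * r1 + r * s11) + -(1 / (2 * m₂)) * (2 * s2 * r2 + r * s22) : ℝ) : ℂ) * Complex.I) := by
      constructor
      · intro h
        push_cast
        apply mul_right_cancel₀ hE
        linear_combination h - ((r : ℂ) * st * E) * Complex.I_mul_I
      · intro h
        push_cast at h
        linear_combination E * h + ((r : ℂ) * st * E) * Complex.I_mul_I
    have hsplit : ∀ a b c d : ℝ, ((a : ℂ) + (b : ℂ) * Complex.I = (c : ℂ) + (d : ℂ) * Complex.I) ↔ (a = c ∧ b = d) := by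
      intro a b c d
      constructor
      · intro h
        constructor
        · have := congrArg Complex.re h; simpa using this
        · have := congrArg Complex.im h; simpa using this
      · rintro ⟨h1, h2⟩; rw [h1, h2]
    rw [step1, hsplit]
    have hW : (2 * r) * (-(1 / (2 * m₁)) * (2 * s1 * r1 + r * s11) + -(1 / (2 * m₂)) * (2 * s2 * r2 + r * s22))
        = -((2 * r * r1 * s1 + r ^ 2 * s11) / m₁ + (2 * r * r2 * s2 + r ^ 2 * s22) / m₂) := by
      field_simp
      ring
    have hY : (-r) * (-(s1 ^ 2 / (2 * m₁) + s2 ^ 2 / (2 * m₂)) - v +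
          ((1 / (2 * m₁)) * (r11 / r) + (1 / (2 * m₂)) * (r22 / r)))
        = -(1 / (2 * m₁)) * (r11 - r * s1 ^ 2) + -(1 / (2 * m₂)) * (r22 - r * s2 ^ 2) + v * r := by
      field_simp
      ring
    have h2r : (2 : ℝ) * r ≠ 0 := mul_ne_zero two_ne_zero hr
    constructor
    · rintro ⟨hre, him⟩
      refine ⟨?_, ?_⟩
      · rw [him]
        exact hW
      · have h' : (-r) * st = (-r) * (-(s1 ^ 2 / (2 * m₁) + s2 ^ 2 / (2 * m₂)) - v +
            ((1 / (2 * m₁)) * (r11 / r) + (1 / (2 * m₂)) * (r22 / r))) := by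
          rw [hY]
          linear_combination hre
        exact mul_left_cancel₀ (neg_ne_zero.mpr hr) h'
    · rintro ⟨hcont, hhj⟩
      refine ⟨?_, ?_⟩
      · rw [hhj]
        linear_combination hY
      · apply mul_left_cancel₀ h2r
        rw [hW]
        exact hcont
  constructor
  · intro h
    exact ⟨fun a b c => ((key a b c).1 (h a b c)).1, fun a b c => ((key a b c).1 (h a b c)).2⟩
  · rintro ⟨h1, h2⟩ a b c
    exact (key a b c).2 ⟨h1 a b c, h2 a b c⟩
end
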